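/- arXiv:2010.09963 — 2 statements merged into one kernel-verified Lean document; each statement's English description precedes it below -/
import Mathlib

section
/- Let b ∈ ℕ³, b₁ = b − e_i, and a = b₁ − e_i or a = b₁ − e_j, and suppose K^b I is ⟨ij,ik,jk⟩, K^(b₁) I is ⟨ij,k⟩, and K^a I is ⟨i,j⟩. Let λ = (a, b₁, b) ∈ Λ(a,b). Then the degree-1 contribution of λ to the canonical sylvan matrix is: D_{i,ij}^{a,b,λ} = (−1)^{j,ij}/4, D_{j,ij}^{a,b,λ} = (−1)^{i,ij}/4, and D_{v,ik}^{a,b,λ} = D_{v,jk}^{a,b,λ} = 0 for v ∈ {i,j}. -/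
open Classical

noncomputable section

namespace Sylvan

/-- Exponent vectors in three variables. -/
abbrev V3 := Fin 3 → ℕ

/-- The `i`-th standard basis vector. -/
def stdVec (i : Fin 3) : V3 := fun j => if j = i then 1 else 0

/-- A monomial ideal, identified with its (upward closed) set of exponent vectors. -/
def IsMonomialIdeal (I : Set V3) : Prop :=
  ∀ ⦃c d : V3⦄, c ∈ I → (∀ i, c i ≤ d i) → d ∈ I

/-- The 0-1 indicator vector of a squarefree face. -/
def ind (τ : Finset (Fin 3)) : V3 := fun i => if i ∈ τ then 1 else 0

/-- The Koszul simplicial complex of `I` in degree `b`: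
faces `τ` with `b ≥ τ` and `x^(b-τ) ∈ I`. -/
def K (I : Set V3) (b : V3) : Set (Finset (Fin 3)) :=
  {τ | (∀ i, ind τ i ≤ b i) ∧ (fun i => b i - ind τ i) ∈ I}

/-- `x^a` is a minimal monomial generator of `I`. -/
def IsMinGen (I : Set V3) (a : V3) : Prop :=
  a ∈ I ∧ ∀ c ∈ I, (∀ i, c i ≤ a i) → c = a

/-- Reduced simplicial chains: formal `k`-linear combinations of faces
(the empty face included). -/
abbrev Ch (k : Type) [Field k] := Finset (Fin 3) →₀ k

variable (k : Type) [Field k]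

/-- The sign `(-1)^(position of v in σ)`. -/
def esgn (v : Fin 3) (σ : Finset (Fin 3)) : ℤ :=
  (-1 : ℤ) ^ (σ.filter (fun u => u < v)).card

/-- The boundary of a single face. -/
def bd (σ : Finset (Fin 3)) : Ch k :=
  ∑ v ∈ σ, Finsupp.single (σ.erase v) ((esgn v σ : ℤ) : k)

/-- The (reduced) simplicial boundary operator. -/
def bdry : Ch k →ₗ[k] Ch k :=
  Finsupp.lsum k fun σ => LinearMap.toSpanSingleton k (Ch k) (bd k σ)

/-- `coeffSign k v σ` is the coefficient of `σ \ {v}` in `∂σ`,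
i.e. the sign `(-1)^{v,σ}` of the paper. -/
def coeffSign (v : Fin 3) (σ : Finset (Fin 3)) : k :=
  bdry k (Finsupp.single σ (1:k)) (σ.erase v)

/-- Faces of cardinality `c` (dimension `c-1`) of a simplicial complex. -/
def faces (Kc : Set (Finset (Fin 3))) (c : ℕ) : Set (Finset (Fin 3)) :=
  {σ | σ ∈ Kc ∧ σ.card = c}

/-- Basis chains attached to a set of faces. -/
def sset (A : Set (Finset (Fin 3))) : Set (Ch k) :=
  (fun σ => Finsupp.single σ (1:k)) '' A

/-- The chain group `C̃_{c-1}(K;k)`, as the span of its card-`c` faces. -/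
def chains (Kc : Set (Finset (Fin 3))) (c : ℕ) : Submodule k (Ch k) :=
  Submodule.span k (sset k (faces Kc c))

/-- The boundaries `B̃_{c-1}(K;k) = ∂ C̃_c(K;k)`, sitting among card-`c` chains. -/
def bdries (Kc : Set (Finset (Fin 3))) (c : ℕ) : Submodule k (Ch k) :=
  (chains k Kc (c+1)).map (bdry k)

/-- A shrubbery in dimension `c-1` (faces of cardinality `c`): a set `T` of card-`c`
faces whose boundaries form a basis of `∂ C̃_{c-1}(K;k)`. -/
def IsShrubbery (Kc : Set (Finset (Fin 3))) (c : ℕ) (T : Finset (Finset (Fin 3))) : Prop :=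
  (T : Set (Finset (Fin 3))) ⊆ faces Kc c ∧
  LinearIndependent k
    (fun σ : (T : Set (Finset (Fin 3))) => bdry k (Finsupp.single (σ : Finset (Fin 3)) (1:k))) ∧
  Submodule.span k ((fun σ => bdry k (Finsupp.single σ (1:k))) '' (T : Set (Finset (Fin 3)))) =
    (chains k Kc c).map (bdry k)

/-- A stake set in dimension `c-1` (faces of cardinality `c`): a set `S` of card-`c`
faces whose complement maps to a basis of `C̃/B̃`. -/
def IsStakeSet (Kc : Set (Finset (Fin 3))) (c : ℕ) (S : Finset (Finset (Fin 3))) : Prop :=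
  (S : Set (Finset (Fin 3))) ⊆ faces Kc c ∧
  Submodule.span k (sset k (faces Kc c \ (S : Set (Finset (Fin 3))))) ⊓ bdries k Kc c = ⊥ ∧
  Submodule.span k (sset k (faces Kc c \ (S : Set (Finset (Fin 3))))) ⊔ bdries k Kc c =
    chains k Kc c

/-- The circuit `ζ(τ)` of a face `τ` with respect to a shrubbery `T`:
the unique cycle of the form `τ - t` with `t ∈ span T`. -/
def circuit (T : Finset (Finset (Fin 3))) (τ : Finset (Fin 3)) : Ch k :=
  if h : ∃! z : Ch k, bdry k z = 0 ∧
      Finsupp.single τ (1:k) - z ∈ Submodule.span k (sset k (T : Set (Finset (Fin 3))))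
  then h.exists.choose else 0

/-- The shrub `s(σ)` of a stake `σ` with respect to a hedge `(S,T)`:
the unique chain in `span T` whose boundary has coefficient `1` on `σ` and `0`
on all other stakes. -/
def shrub (S T : Finset (Finset (Fin 3))) (σ : Finset (Fin 3)) : Ch k :=
  if h : ∃! s : Ch k, s ∈ Submodule.span k (sset k (T : Set (Finset (Fin 3)))) ∧
      bdry k s σ = 1 ∧ ∀ σ' ∈ S, σ' ≠ σ → bdry k s σ' = 0
  then h.exists.choose else 0

/-- The hedge rim `r(τ)` of a face `τ` with respect to a stake set `S`:
the unique chain supported outside `S` with `τ - r(τ)` a boundary. -/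
def hedgeRim (Kc : Set (Finset (Fin 3))) (c : ℕ) (S : Finset (Finset (Fin 3)))
    (τ : Finset (Fin 3)) : Ch k :=
  if h : ∃! r : Ch k,
      r ∈ Submodule.span k (sset k (faces Kc c \ (S : Set (Finset (Fin 3))))) ∧
      Finsupp.single τ (1:k) - r ∈ bdries k Kc c
  then h.exists.choose else 0

/-- The points of the saturated decreasing lattice path from `pt a d n` down to `a`
encoded by the list of directions `d` (read from `a` upwards). -/
def pt (a : V3) {n : ℕ} (d : Fin n → Fin 3) (m : ℕ) : V3 :=
  fun i => a i + ∑ m' ∈ Finset.range m, (if h : m' < n then stdVec (d ⟨m', h⟩) i else 0)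

/-- The data of a hedgerow: `(Sb, S, T, Ta)`. -/
abbrev HRData (n : ℕ) :=
  Finset (Finset (Fin 3)) × (Fin (n+1) → Finset (Finset (Fin 3))) ×
    (Fin (n+1) → Finset (Finset (Fin 3))) × Finset (Finset (Fin 3))

/-- A hedgerow in homological dimension `c-1` along the lattice path from `pt a d n`
down to `a`: a stake set in the Koszul complex at the top, a hedge at each interior
lattice point, and a shrubbery at the bottom.  (Unused components are pinned to `∅`.) -/
def IsHedgerow (I : Set V3) (a : V3) {n : ℕ} (d : Fin n → Fin 3) (c : ℕ)
    (h : HRData n) : Prop :=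
  IsStakeSet k (K I (pt a d n)) c h.1 ∧
  (∀ m : Fin (n+1), 0 < (m:ℕ) → (m:ℕ) < n →
    IsStakeSet k (K I (pt a d m)) (c-1) (h.2.1 m) ∧
    IsShrubbery k (K I (pt a d m)) c (h.2.2.1 m)) ∧
  (∀ m : Fin (n+1), ((m:ℕ) = 0 ∨ (m:ℕ) = n) → h.2.1 m = ∅ ∧ h.2.2.1 m = ∅) ∧
  IsShrubbery k (K I a) (c-1) h.2.2.2

/-- `Δ_{c-1,λ} I`: the number of hedgerows along the lattice path. -/
def Delta (I : Set V3) (a : V3) {n : ℕ} (d : Fin n → Fin 3) (c : ℕ) : ℕ :=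
  Nat.card {h : HRData n // IsHedgerow k I a d c h}

/-- The data of a chain-link fence: a hedgerow together with the faces `τ_ℓ` and
`σ_ℓ` (indexed here by the lattice point `pt a d m`, so `τ_ℓ = tau (n-ℓ)` and
`σ_ℓ = sig (n-ℓ)`). -/
abbrev FData (n : ℕ) :=
  HRData n × (Fin (n+1) → Finset (Fin 3)) × (Fin (n+1) → Finset (Fin 3))

/-- A chain-link fence from the card-`c` face `τtop` of the Koszul complex at the top
of the lattice path to the card-`(c-1)` face `σbot` of the Koszul complex at the
bottom. -/
def IsFence (I : Set V3) (a : V3) {n : ℕ} (d : Fin n → Fin 3) (c : ℕ)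
    (σbot τtop : Finset (Fin 3)) (f : FData n) : Prop :=
  IsHedgerow k I a d c f.1 ∧
  (∀ m : Fin (n+1), 0 < (m:ℕ) → f.2.1 m ∈ faces (K I (pt a d m)) c) ∧
  (∀ m : Fin (n+1), (m:ℕ) < n → f.2.2 m ∈ faces (K I (pt a d m)) (c-1)) ∧
  f.2.1 0 = ∅ ∧ f.2.2 (Fin.last n) = ∅ ∧
  hedgeRim k (K I (pt a d n)) c f.1.1 τtop (f.2.1 (Fin.last n)) ≠ 0 ∧
  (∀ m : Fin n, f.2.2 m.castSucc = (f.2.1 m.succ).erase (d m)) ∧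
  (∀ m : Fin (n+1), 0 < (m:ℕ) → (m:ℕ) < n →
    f.2.2 m ∈ f.1.2.1 m ∧
    shrub k (f.1.2.1 m) (f.1.2.2.1 m) (f.2.2 m) (f.2.1 m) ≠ 0) ∧
  circuit k f.1.2.2.2 (f.2.2 0) σbot ≠ 0

/-- The weight of a chain-link fence: the product of the boundary-link coefficient,
the chain-link coefficients, the containment coefficients, and the cycle-link
coefficient. -/
def weight (I : Set V3) (a : V3) {n : ℕ} (d : Fin n → Fin 3) (c : ℕ)
    (σbot τtop : Finset (Fin 3)) (f : FData n) : k :=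
  hedgeRim k (K I (pt a d n)) c f.1.1 τtop (f.2.1 (Fin.last n)) *
  (∏ m : Fin (n+1), if 0 < (m:ℕ) ∧ (m:ℕ) < n
      then shrub k (f.1.2.1 m) (f.1.2.2.1 m) (f.2.2 m) (f.2.1 m) else 1) *
  (∏ m : Fin n, bdry k (Finsupp.single (f.2.1 m.succ) (1:k)) (f.2.2 m.castSucc)) *
  circuit k f.1.2.2.2 (f.2.2 0) σbot

/-- `D_{σ,τ}^{a,b,λ}`: the contribution of the single lattice path `λ` (encoded by
its direction sequence `d`) to the canonical sylvan matrix entry. -/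
def Dpath (I : Set V3) (a : V3) {n : ℕ} (d : Fin n → Fin 3) (c : ℕ)
    (σbot τtop : Finset (Fin 3)) : k :=
  ((Delta k I a d c : k))⁻¹ *
    ∑ᶠ f ∈ {f : FData n | IsFence k I a d c σbot τtop f}, weight k I a d c σbot τtop f

/-- `|b - a|`, the common length of all saturated decreasing lattice paths. -/
def nlen (a b : V3) : ℕ := ∑ i, (b i - a i)

/-- The canonical sylvan matrix entry `D_{σ,τ}^{a,b}`: a sum over all saturated
decreasing lattice paths from `b` to `a`. -/
def D (I : Set V3) (a b : V3) (c : ℕ) (σbot τtop : Finset (Fin 3)) : k :=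
  ∑ᶠ d ∈ {d : Fin (nlen a b) → Fin 3 | pt a d (nlen a b) = b},
    Dpath k I a d c σbot τtop

/-- `K` has exactly the set `F` as facets, i.e. it is the downward closure of `F`. -/
def hasFacets (Kc F : Set (Finset (Fin 3))) : Prop :=
  Kc = {σ | ∃ f ∈ F, σ ⊆ f}

/-- `dim_k H̃₀(K;k) ≠ 0`: some reduced 0-cycle is not a boundary. -/
def H0nontrivial (Kc : Set (Finset (Fin 3))) : Prop :=
  ¬ (chains k Kc 1 ⊓ LinearMap.ker (bdry k) ≤ bdries k Kc 1)


section Aux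
variable {k : Type} [Field k]

lemma bdry_single (σ : Finset (Fin 3)) : bdry k (Finsupp.single σ (1:k)) = bd k σ := by
  simp [bdry, Finsupp.lsum_single, LinearMap.toSpanSingleton_apply]

lemma bd_empty : bd k (∅ : Finset (Fin 3)) = 0 := by simp [bd]

lemma bd_vertex (v : Fin 3) : bd k {v} = Finsupp.single ∅ (1:k) := by
  simp [bd, esgn, Finset.filter_singleton]

lemma bd_edge {u v : Fin 3} (huv : u ≠ v) :
    bd k {u, v} = Finsupp.single {v} (((esgn u {u,v} : ℤ) : k))
      + Finsupp.single {u} (((esgn v {u,v} : ℤ) : k)) := by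
  rw [bd, Finset.sum_pair huv]
  rw [Finset.erase_insert (by simp [huv]), Finset.erase_insert_of_ne huv]
  simp

lemma esgn_cases {u v : Fin 3} (huv : u ≠ v) :
    (esgn u {u,v} = 1 ∧ esgn v {u,v} = -1) ∨ (esgn u {u,v} = -1 ∧ esgn v {u,v} = 1) := by
  rcases huv.lt_or_gt with h | h
  · left
    constructor
    · simp [esgn, Finset.filter_insert, Finset.filter_singleton, not_lt_of_gt h, lt_irrefl]
    · simp [esgn, Finset.filter_insert, Finset.filter_singleton, h, lt_irrefl]
  · right
    constructor
    · simp [esgn, Finset.filter_insert, Finset.filter_singleton, h, lt_irrefl]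
    · simp [esgn, Finset.filter_insert, Finset.filter_singleton, not_lt_of_gt h, lt_irrefl]

lemma coeffSign_edge_fst {u v : Fin 3} (huv : u ≠ v) :
    coeffSign k u {u,v} = ((esgn u {u,v} : ℤ) : k) := by
  have h1 : ({u,v} : Finset (Fin 3)).erase u = {v} := Finset.erase_insert (by simp [huv])
  rw [coeffSign, bdry_single, bd_edge huv, h1]
  simp [Finsupp.single_apply, huv, huv.symm]

lemma coeffSign_edge_snd {u v : Fin 3} (huv : u ≠ v) :
    coeffSign k v {u,v} = ((esgn v {u,v} : ℤ) : k) := by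
  have h1 : ({u,v} : Finset (Fin 3)).erase v = {u} := by
    rw [Finset.erase_insert_of_ne huv]; simp
  rw [coeffSign, bdry_single, bd_edge huv, h1]
  simp [Finsupp.single_apply, huv, huv.symm]

lemma coeffSign_cases {u v : Fin 3} (huv : u ≠ v) :
    (coeffSign k u {u,v} = 1 ∧ coeffSign k v {u,v} = -1) ∨
    (coeffSign k u {u,v} = -1 ∧ coeffSign k v {u,v} = 1) := by
  rw [coeffSign_edge_fst huv, coeffSign_edge_snd huv]
  rcases esgn_cases huv with ⟨h1, h2⟩ | ⟨h1, h2⟩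
  · left; rw [h1, h2]; norm_num
  · right; rw [h1, h2]; norm_num

lemma apply_eq_zero_of_mem_span {A : Set (Finset (Fin 3))} {x : Ch k}
    (hx : x ∈ Submodule.span k (sset k A)) {σ : Finset (Fin 3)} (hσ : σ ∉ A) :
    x σ = 0 := by
  have hle : Submodule.span k (sset k A) ≤ LinearMap.ker (Finsupp.lapply σ) := by
    rw [Submodule.span_le]
    rintro _ ⟨τ, hτ, rfl⟩
    simp only [SetLike.mem_coe, LinearMap.mem_ker, Finsupp.lapply_apply, Finsupp.single_apply]
    rw [if_neg]
    rintro rfl; exact hσ hτ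
  simpa using hle hx

end Aux

section Aux2
variable {k : Type} [Field k] {Kc : Set (Finset (Fin 3))}

lemma mem_faces {c : ℕ} {σ : Finset (Fin 3)} : σ ∈ faces Kc c ↔ σ ∈ Kc ∧ σ.card = c :=
  Iff.rfl

lemma facets_triangle_faces2 {i j l : Fin 3} (hij : i ≠ j) (hil : i ≠ l) (hjl : j ≠ l)
    (h : hasFacets Kc {{i, j}, {i, l}, {j, l}}) :
    faces Kc 2 = {{i,j},{i,l},{j,l}} := by
  subst h
  ext σ
  simp only [mem_faces, Set.mem_setOf_eq, Set.mem_insert_iff, Set.mem_singleton_iff]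
  constructor
  · rintro ⟨⟨f, hf, hsub⟩, hcard⟩
    have hf2 : f.card = 2 := by
      rcases hf with rfl | rfl | rfl
      exacts [Finset.card_pair hij, Finset.card_pair hil, Finset.card_pair hjl]
    have := Finset.eq_of_subset_of_card_le hsub (by omega)
    subst this
    exact hf
  · intro hσ
    have hc : σ.card = 2 := by
      rcases hσ with rfl | rfl | rfl
      exacts [Finset.card_pair hij, Finset.card_pair hil, Finset.card_pair hjl]
    exact ⟨⟨σ, hσ, subset_rfl⟩, hc⟩

lemma facets_triangle_faces3 {i j l : Fin 3} (hij : i ≠ j) (hil : i ≠ l) (hjl : j ≠ l)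
    (h : hasFacets Kc {{i, j}, {i, l}, {j, l}}) :
    faces Kc 3 = ∅ := by
  subst h
  ext σ
  simp only [mem_faces, Set.mem_setOf_eq, Set.mem_empty_iff_false, iff_false, not_and]
  rintro ⟨f, hf, hsub⟩
  have hf2 : f.card = 2 := by
    rcases hf with rfl | rfl | rfl
    exacts [Finset.card_pair hij, Finset.card_pair hil, Finset.card_pair hjl]
  have := Finset.card_le_card hsub
  omega

lemma facets_edgevertex_faces2 {i j l : Fin 3} (hij : i ≠ j)
    (h : hasFacets Kc {{i, j}, {l}}) :
    faces Kc 2 = {{i,j}} := by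
  subst h
  ext σ
  simp only [mem_faces, Set.mem_setOf_eq, Set.mem_insert_iff, Set.mem_singleton_iff]
  constructor
  · rintro ⟨⟨f, hf, hsub⟩, hcard⟩
    rcases hf with rfl | rfl
    · exact Finset.eq_of_subset_of_card_le hsub (by rw [Finset.card_pair hij, hcard])
    · have := Finset.card_le_card hsub
      simp at this
      omega
  · rintro rfl
    exact ⟨⟨{i,j}, Or.inl rfl, subset_rfl⟩, Finset.card_pair hij⟩

lemma facets_edgevertex_faces3 {i j l : Fin 3} (hij : i ≠ j)
    (h : hasFacets Kc {{i, j}, {l}}) :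
    faces Kc 3 = ∅ := by
  subst h
  ext σ
  simp only [mem_faces, Set.mem_setOf_eq, Set.mem_empty_iff_false, iff_false, not_and]
  rintro ⟨f, hf, hsub⟩
  have hf2 : f.card ≤ 2 := by
    rcases hf with rfl | rfl
    · exact le_of_eq (Finset.card_pair hij)
    · simp
  have := Finset.card_le_card hsub
  omega

lemma facets_edgevertex_faces1 {i j l : Fin 3} (hij : i ≠ j)
    (h : hasFacets Kc {{i, j}, {l}}) :
    faces Kc 1 = {{i},{j},{l}} := by
  subst h
  ext σ
  simp only [mem_faces, Set.mem_setOf_eq, Set.mem_insert_iff, Set.mem_singleton_iff]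
  constructor
  · rintro ⟨⟨f, hf, hsub⟩, hcard⟩
    obtain ⟨x, rfl⟩ := Finset.card_eq_one.1 hcard
    rcases hf with rfl | rfl
    · have := Finset.singleton_subset_iff.1 hsub
      rcases Finset.mem_insert.1 this with rfl | hx
      · exact Or.inl rfl
      · exact Or.inr (Or.inl (by rw [Finset.mem_singleton.1 hx]))
    · have := Finset.singleton_subset_iff.1 hsub
      exact Or.inr (Or.inr (by rw [Finset.mem_singleton.1 this]))
  · intro hσ
    rcases hσ with rfl | rfl | rfl
    · exact ⟨⟨{i,j}, Or.inl rfl, Finset.singleton_subset_iff.2 (Finset.mem_insert_self _ _)⟩,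
        Finset.card_singleton _⟩
    · exact ⟨⟨{i,j}, Or.inl rfl, Finset.singleton_subset_iff.2
        (Finset.mem_insert_of_mem (Finset.mem_singleton_self _))⟩, Finset.card_singleton _⟩
    · exact ⟨⟨{l}, Or.inr rfl, subset_rfl⟩, Finset.card_singleton _⟩

lemma facets_twopoints_faces1 {i j : Fin 3}
    (h : hasFacets Kc {{i}, {j}}) :
    faces Kc 1 = {{i},{j}} := by
  subst h
  ext σ
  simp only [mem_faces, Set.mem_setOf_eq, Set.mem_insert_iff, Set.mem_singleton_iff]
  constructor
  · rintro ⟨⟨f, hf, hsub⟩, hcard⟩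
    have hf1 : f.card = 1 := by rcases hf with rfl | rfl <;> simp
    have := Finset.eq_of_subset_of_card_le hsub (by omega)
    subst this
    exact hf
  · intro hσ
    have hc : σ.card = 1 := by rcases hσ with rfl | rfl <;> simp
    exact ⟨⟨σ, hσ, subset_rfl⟩, hc⟩

lemma facets_twopoints_faces2 {i j : Fin 3}
    (h : hasFacets Kc {{i}, {j}}) :
    faces Kc 2 = ∅ := by
  subst h
  ext σ
  simp only [mem_faces, Set.mem_setOf_eq, Set.mem_empty_iff_false, iff_false, not_and]
  rintro ⟨f, hf, hsub⟩
  have hf1 : f.card = 1 := by rcases hf with rfl | rfl <;> simp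
  have := Finset.card_le_card hsub
  omega

lemma chains_eq_bot {c : ℕ} (h : faces Kc c = ∅) : chains k Kc c = ⊥ := by
  rw [chains, h, sset, Set.image_empty, Submodule.span_empty]

lemma bdries_eq_bot {c : ℕ} (h : faces Kc (c+1) = ∅) : bdries k Kc c = ⊥ := by
  rw [bdries, chains_eq_bot h, Submodule.map_bot]

lemma bdries_of_faces_singleton {c : ℕ} {τ : Finset (Fin 3)} (h : faces Kc (c+1) = {τ}) :
    bdries k Kc c = Submodule.span k {bd k τ} := by
  rw [bdries, chains, h, sset, Set.image_singleton, Submodule.map_span, Set.image_singleton,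
    bdry_single]

end Aux2

section Aux3
variable {k : Type} [Field k] {Kc : Set (Finset (Fin 3))}

lemma bd_edge' {u v : Fin 3} (huv : u ≠ v) :
    bd k {u, v} = Finsupp.single {v} (coeffSign k u {u,v})
      + Finsupp.single {u} (coeffSign k v {u,v}) := by
  rw [bd_edge huv, coeffSign_edge_fst huv, coeffSign_edge_snd huv]

lemma coeffSign_ne_zero {u v : Fin 3} (huv : u ≠ v) : coeffSign k u {u,v} ≠ 0 := by
  rcases coeffSign_cases (k := k) huv with ⟨h1, _⟩ | ⟨h1, _⟩ <;> rw [h1] <;> norm_num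

lemma coeffSign_sq {u v : Fin 3} (huv : u ≠ v) :
    coeffSign k u {u,v} * coeffSign k u {u,v} = 1 := by
  rcases coeffSign_cases (k := k) huv with ⟨h1, _⟩ | ⟨h1, _⟩ <;> rw [h1] <;> norm_num

lemma coeffSign_mul {u v : Fin 3} (huv : u ≠ v) :
    coeffSign k u {u,v} * coeffSign k v {u,v} = -1 := by
  rcases coeffSign_cases (k := k) huv with ⟨h1, h2⟩ | ⟨h1, h2⟩ <;> rw [h1, h2] <;> norm_num

lemma coeffSign_neg {u v : Fin 3} (huv : u ≠ v) :
    coeffSign k v {u,v} = - coeffSign k u {u,v} := by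
  rcases coeffSign_cases (k := k) huv with ⟨h1, h2⟩ | ⟨h1, h2⟩ <;> rw [h1, h2] <;> norm_num

/-- A stake set in a dimension with no boundaries must be empty. -/
lemma isStakeSet_iff_of_bdries_bot {c : ℕ} (hB : bdries k Kc c = ⊥)
    (S : Finset (Finset (Fin 3))) :
    IsStakeSet k Kc c S ↔ S = ∅ := by
  constructor
  · rintro ⟨hsub, _, hsup⟩
    by_contra hne
    obtain ⟨σ, hσ⟩ := Finset.nonempty_iff_ne_empty.2 hne
    have hσf : σ ∈ faces Kc c := hsub hσ
    have hmem : Finsupp.single σ (1:k) ∈ chains k Kc c :=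
      Submodule.subset_span (Set.mem_image_of_mem _ hσf)
    rw [← hsup, hB, sup_bot_eq] at hmem
    have := apply_eq_zero_of_mem_span hmem (σ := σ) (by simp [hσ])
    simp at this
  · rintro rfl
    refine ⟨by simp, by simp [hB], by simp [hB, chains]⟩

/-- A shrubbery in a dimension with a unique face with nonzero boundary. -/
lemma isShrubbery_iff_of_faces_singleton {c : ℕ} {τ : Finset (Fin 3)}
    (hf : faces Kc c = {τ}) (hbd : bd k τ ≠ 0) (T : Finset (Finset (Fin 3))) :
    IsShrubbery k Kc c T ↔ T = {τ} := by
  have hch : (chains k Kc c).map (bdry k) = Submodule.span k {bd k τ} := by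
    rw [chains, hf, sset, Set.image_singleton, Submodule.map_span, Set.image_singleton,
      bdry_single]
  constructor
  · rintro ⟨hsub, _, hspan⟩
    have hsub' : T ⊆ {τ} := by
      intro x hx
      have := hsub hx
      rw [hf] at this
      simpa using this
    rcases Finset.subset_singleton_iff.1 hsub' with rfl | rfl
    · exfalso
      rw [hch] at hspan
      have : bd k τ ∈ Submodule.span k ({bd k τ} : Set (Ch k)) :=
        Submodule.subset_span rfl
      rw [← hspan] at this
      simp at this
      exact hbd this
    · rfl
  · rintro rfl
    refine ⟨by rw [hf]; simp, ?_, ?_⟩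
    · rw [show ((({τ} : Finset (Finset (Fin 3))) : Set (Finset (Fin 3)))) = {τ} from
        Finset.coe_singleton τ]
      refine LinearIndependent.of_subsingleton default ?_
      rw [bdry_single]
      simpa using hbd
    · rw [hch]
      simp [bdry_single]

end Aux3

section Aux4
variable {k : Type} [Field k] {Kc : Set (Finset (Fin 3))}

lemma singleton_ne_singleton {u v : Fin 3} (h : u ≠ v) :
    ({u} : Finset (Fin 3)) ≠ {v} := by
  simp [Finset.singleton_injective.ne_iff, h]

/-- Shrubbery (one direction) for a complex whose vertices are `{u}` and `{v}`. -/
lemma isShrubbery_of_twopoints {u v : Fin 3} (hf : faces Kc 1 = {{u},{v}}) :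
    IsShrubbery k Kc 1 {{u}} := by
  have hch : (chains k Kc 1).map (bdry k) =
      Submodule.span k {(Finsupp.single ∅ (1:k) : Ch k)} := by
    rw [chains, hf, sset, Set.image_insert_eq, Set.image_singleton, Submodule.map_span,
      Set.image_insert_eq, Set.image_singleton, bdry_single, bdry_single, bd_vertex, bd_vertex]
    simp
  refine ⟨by rw [hf]; simp, ?_, ?_⟩
  · rw [show ((({{u}} : Finset (Finset (Fin 3))) : Set (Finset (Fin 3)))) = {{u}} from
      Finset.coe_singleton _]
    refine LinearIndependent.of_subsingleton default ?_
    have hd : ((default : ({{u}} : Set (Finset (Fin 3)))) : Finset (Fin 3)) = {u} := rfl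
    rw [bdry_single, hd, bd_vertex]
    simp [Finsupp.single_eq_zero]
  · rw [hch]
    simp [bdry_single, bd_vertex]

/-- Shrubbery characterization for a complex whose vertices are `{u}` and `{v}`. -/
lemma isShrubbery_twopoints_iff {u v : Fin 3} (huv : u ≠ v)
    (hf : faces Kc 1 = {{u},{v}}) (T : Finset (Finset (Fin 3))) :
    IsShrubbery k Kc 1 T ↔ T = {{u}} ∨ T = {{v}} := by
  constructor
  · rintro ⟨hsub, hli, hspan⟩
    have hmem : ∀ x ∈ T, x = {u} ∨ x = {v} := by
      intro x hx
      have := hsub hx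
      rw [hf] at this
      simpa using this
    by_cases hu : {u} ∈ T <;> by_cases hv : {v} ∈ T
    · exfalso
      have hne : (⟨{u}, hu⟩ : (T : Set (Finset (Fin 3)))) ≠ ⟨{v}, hv⟩ := by
        simp [Subtype.ext_iff, singleton_ne_singleton huv]
      apply hne
      apply hli.injective
      simp only [bdry_single, bd_vertex]
    · left
      apply Finset.ext
      intro x
      simp only [Finset.mem_singleton]
      constructor
      · intro hx
        rcases hmem x hx with rfl | rfl
        · rfl
        · exact absurd hx hv
      · rintro rfl; exact hu
    · right
      apply Finset.ext
      intro x
      simp only [Finset.mem_singleton]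
      constructor
      · intro hx
        rcases hmem x hx with rfl | rfl
        · exact absurd hx hu
        · rfl
      · rintro rfl; exact hv
    · exfalso
      have hT : T = ∅ := by
        apply Finset.ext
        intro x
        simp only [Finset.notMem_empty, iff_false]
        intro hx
        rcases hmem x hx with rfl | rfl
        exacts [hu hx, hv hx]
      subst hT
      have h0 : (Finsupp.single ∅ (1:k) : Ch k) ∈ (chains k Kc 1).map (bdry k) := by
        refine ⟨Finsupp.single {u} (1:k), ?_, by rw [bdry_single, bd_vertex]⟩
        exact Submodule.subset_span (Set.mem_image_of_mem _ (by rw [hf]; simp))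
      rw [← hspan] at h0
      simp only [Finset.coe_empty, Set.image_empty, Submodule.span_empty,
        Submodule.mem_bot] at h0
      exact one_ne_zero (Finsupp.single_eq_zero.1 h0)
  · rintro (rfl | rfl)
    · exact isShrubbery_of_twopoints hf
    · exact isShrubbery_of_twopoints (by rw [hf, Set.pair_comm])

end Aux4

section Aux5
variable {k : Type} [Field k] {Kc : Set (Finset (Fin 3))}

lemma bd_pair_apply_fst {u v : Fin 3} (huv : u ≠ v) :
    bd k {u,v} {u} = coeffSign k v {u,v} := by
  rw [bd_edge' huv, Finsupp.add_apply, Finsupp.single_eq_of_ne' (singleton_ne_singleton huv.symm),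
    Finsupp.single_eq_same, zero_add]

lemma bd_pair_apply_snd {u v : Fin 3} (huv : u ≠ v) :
    bd k {u,v} {v} = coeffSign k u {u,v} := by
  rw [bd_edge' huv, Finsupp.add_apply, Finsupp.single_eq_same,
    Finsupp.single_eq_of_ne' (singleton_ne_singleton huv), add_zero]

lemma bd_pair_apply_other {u v : Fin 3} {τ : Finset (Fin 3)} (huv : u ≠ v)
    (h1 : τ ≠ {u}) (h2 : τ ≠ {v}) : bd k {u,v} τ = 0 := by
  rw [bd_edge' huv, Finsupp.add_apply, Finsupp.single_eq_of_ne' (Ne.symm h2),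
    Finsupp.single_eq_of_ne' (Ne.symm h1), add_zero]

/-- One direction of the middle stake set characterization: `{{v}}` is a stake set. -/
lemma isStakeSet_mid_of {u v w : Fin 3} (huv : u ≠ v) (huw : u ≠ w) (hvw : v ≠ w)
    (hf1 : faces Kc 1 = {{u},{v},{w}})
    (hB : bdries k Kc 1 = Submodule.span k {bd k {u,v}}) :
    IsStakeSet k Kc 1 {{v}} := by
  have hDset : faces Kc 1 \ ((({{v}} : Finset (Finset (Fin 3)))) : Set (Finset (Fin 3)))
      = {{u},{w}} := by
    rw [hf1]
    ext x
    simp only [Set.mem_diff, Set.mem_insert_iff, Set.mem_singleton_iff, Finset.coe_singleton]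
    constructor
    · rintro ⟨rfl | rfl | rfl, hne⟩
      · exact Or.inl rfl
      · exact absurd rfl hne
      · exact Or.inr rfl
    · rintro (rfl | rfl)
      · exact ⟨Or.inl rfl, singleton_ne_singleton huv⟩
      · exact ⟨Or.inr (Or.inr rfl), singleton_ne_singleton hvw.symm⟩
  refine ⟨by rw [hf1]; simp, ?_, ?_⟩
  · rw [Submodule.eq_bot_iff]
    rintro x ⟨hx1, hx2⟩
    rw [SetLike.mem_coe, hB, Submodule.mem_span_singleton] at hx2
    obtain ⟨c, rfl⟩ := hx2
    have hv0 : (c • bd k {u,v}) {v} = 0 := by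
      apply apply_eq_zero_of_mem_span hx1
      rw [hDset]
      simp only [Set.mem_insert_iff, Set.mem_singleton_iff]
      push_neg
      exact ⟨singleton_ne_singleton huv.symm, singleton_ne_singleton hvw⟩
    rw [Finsupp.smul_apply, bd_pair_apply_snd huv, smul_eq_mul] at hv0
    have hc : c = 0 := by
      rcases mul_eq_zero.1 hv0 with h | h
      · exact h
      · exact absurd h (coeffSign_ne_zero huv)
    rw [hc, zero_smul]
  · apply le_antisymm
    · apply sup_le
      · exact Submodule.span_mono (Set.image_mono Set.diff_subset)
      · rw [hB, Submodule.span_le]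
        rintro x (rfl : x = bd k {u,v})
        rw [bd_edge' huv]
        have h1 : (Finsupp.single {v} (coeffSign k u {u,v}) : Ch k)
            = coeffSign k u {u,v} • Finsupp.single {v} (1:k) := by
          rw [Finsupp.smul_single', mul_one]
        have h2 : (Finsupp.single {u} (coeffSign k v {u,v}) : Ch k)
            = coeffSign k v {u,v} • Finsupp.single {u} (1:k) := by
          rw [Finsupp.smul_single', mul_one]
        rw [h1, h2]
        apply add_mem
        · exact Submodule.smul_mem _ _ (Submodule.subset_span
            (Set.mem_image_of_mem _ (by rw [hf1]; simp)))
        · exact Submodule.smul_mem _ _ (Submodule.subset_span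
            (Set.mem_image_of_mem _ (by rw [hf1]; simp)))
    · rw [chains, Submodule.span_le]
      rintro _ ⟨y, hy, rfl⟩
      dsimp only
      rw [hf1] at hy
      have memleft : ∀ z : Finset (Fin 3), z ∈ faces Kc 1 \
          ((({{v}} : Finset (Finset (Fin 3)))) : Set (Finset (Fin 3))) →
          (Finsupp.single z (1:k) : Ch k) ∈
            Submodule.span k (sset k (faces Kc 1 \
              ((({{v}} : Finset (Finset (Fin 3)))) : Set (Finset (Fin 3))))) ⊔
            bdries k Kc 1 := by
        intro z hz
        exact le_sup_left (α := Submodule k (Ch k)) (Submodule.subset_span (Set.mem_image_of_mem _ hz))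
      rcases hy with rfl | rfl | rfl
      · apply memleft; rw [hDset]; simp
      · -- y = {v} : use the boundary
        have hbd : bd k {u,v} ∈ Submodule.span k (sset k (faces Kc 1 \
              ((({{v}} : Finset (Finset (Fin 3)))) : Set (Finset (Fin 3))))) ⊔
            bdries k Kc 1 :=
          le_sup_right (α := Submodule k (Ch k)) (hB ▸ Submodule.subset_span rfl)
        have hu1 : (Finsupp.single {u} (1:k) : Ch k) ∈ Submodule.span k (sset k (faces Kc 1 \
              ((({{v}} : Finset (Finset (Fin 3)))) : Set (Finset (Fin 3))))) ⊔
            bdries k Kc 1 := by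
          apply memleft; rw [hDset]; simp
        have key : (Finsupp.single {v} (1:k) : Ch k) = (coeffSign k u {u,v})⁻¹ •
            (bd k {u,v} - coeffSign k v {u,v} • Finsupp.single {u} (1:k)) := by
          rw [bd_edge' huv, Finsupp.smul_single', mul_one, add_sub_cancel_right,
            Finsupp.smul_single', inv_mul_cancel₀ (coeffSign_ne_zero huv)]
        rw [key]
        exact Submodule.smul_mem _ _ (sub_mem hbd (Submodule.smul_mem _ _ hu1))
      · apply memleft; rw [hDset]; simp

/-- Full characterization of stake sets for the middle complex. -/
lemma isStakeSet_mid_iff {u v w : Fin 3} (huv : u ≠ v) (huw : u ≠ w) (hvw : v ≠ w)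
    (hf1 : faces Kc 1 = {{u},{v},{w}})
    (hB : bdries k Kc 1 = Submodule.span k {bd k {u,v}})
    (S : Finset (Finset (Fin 3))) :
    IsStakeSet k Kc 1 S ↔ S = {{u}} ∨ S = {{v}} := by
  constructor
  · rintro ⟨hsub, hinf, hsup⟩
    have hmem : ∀ x ∈ S, x = {u} ∨ x = {v} ∨ x = {w} := by
      intro x hx
      have := hsub hx
      rw [hf1] at this
      simpa using this
    -- {w} ∉ S
    have hwS : {w} ∉ S := by
      intro hw
      have hker : Submodule.span k (sset k (faces Kc 1 \ (S : Set (Finset (Fin 3))))) ⊔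
          bdries k Kc 1 ≤ LinearMap.ker (Finsupp.lapply ({w} : Finset (Fin 3))) := by
        apply sup_le
        · rw [Submodule.span_le]
          rintro _ ⟨y, hy, rfl⟩
          simp only [SetLike.mem_coe, LinearMap.mem_ker, Finsupp.lapply_apply]
          apply Finsupp.single_eq_of_ne
          intro h
          exact hy.2 (h ▸ hw)
        · rw [hB, Submodule.span_le]
          rintro x (rfl : x = bd k {u,v})
          simp only [SetLike.mem_coe, LinearMap.mem_ker, Finsupp.lapply_apply]
          exact bd_pair_apply_other huv (singleton_ne_singleton huw.symm)
            (singleton_ne_singleton hvw.symm)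
      have hwch : (Finsupp.single ({w} : Finset (Fin 3)) (1:k) : Ch k) ∈ chains k Kc 1 :=
        Submodule.subset_span (Set.mem_image_of_mem _ (by rw [hf1]; simp))
      rw [← hsup] at hwch
      have := hker hwch
      simp [LinearMap.mem_ker, Finsupp.lapply_apply] at this
    by_cases hu : {u} ∈ S <;> by_cases hv : {v} ∈ S
    · -- both: contradiction via the functional
      exfalso
      set φ : Ch k →ₗ[k] k := coeffSign k u {u,v} • (Finsupp.lapply {u} : Ch k →ₗ[k] k)
        - coeffSign k v {u,v} • (Finsupp.lapply {v} : Ch k →ₗ[k] k) with hφ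
      have hker : Submodule.span k (sset k (faces Kc 1 \ (S : Set (Finset (Fin 3))))) ⊔
          bdries k Kc 1 ≤ LinearMap.ker φ := by
        apply sup_le
        · rw [Submodule.span_le]
          rintro _ ⟨y, hy, rfl⟩
          simp only [SetLike.mem_coe, LinearMap.mem_ker, hφ, LinearMap.sub_apply,
            LinearMap.smul_apply, Finsupp.lapply_apply, smul_eq_mul]
          rw [Finsupp.single_eq_of_ne' (fun h => hy.2 (by rw [h]; exact hu)),
            Finsupp.single_eq_of_ne' (fun h => hy.2 (by rw [h]; exact hv))]
          ring
        · rw [hB, Submodule.span_le]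
          rintro x (rfl : x = bd k {u,v})
          simp only [SetLike.mem_coe, LinearMap.mem_ker, hφ, LinearMap.sub_apply,
            LinearMap.smul_apply, Finsupp.lapply_apply, smul_eq_mul]
          rw [bd_pair_apply_fst huv, bd_pair_apply_snd huv]
          ring
      have hch : (Finsupp.single ({u} : Finset (Fin 3)) (1:k) : Ch k) ∈ chains k Kc 1 :=
        Submodule.subset_span (Set.mem_image_of_mem _ (by rw [hf1]; simp))
      rw [← hsup] at hch
      have h0 := hker hch
      have e1 : (Finsupp.single ({u} : Finset (Fin 3)) (1:k) : Ch k) {u} = 1 :=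
        Finsupp.single_eq_same
      have e2 : (Finsupp.single ({u} : Finset (Fin 3)) (1:k) : Ch k) {v} = 0 :=
        Finsupp.single_eq_of_ne' (singleton_ne_singleton huv)
      rw [LinearMap.mem_ker, hφ, LinearMap.sub_apply, LinearMap.smul_apply,
        LinearMap.smul_apply, Finsupp.lapply_apply, Finsupp.lapply_apply, e1, e2,
        smul_eq_mul, smul_eq_mul, mul_one, mul_zero, sub_zero] at h0
      exact coeffSign_ne_zero huv h0
    · left
      apply Finset.ext
      intro x
      simp only [Finset.mem_singleton]
      constructor
      · intro hx
        rcases hmem x hx with rfl | rfl | rfl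
        · rfl
        · exact absurd hx hv
        · exact absurd hx hwS
      · rintro rfl; exact hu
    · right
      apply Finset.ext
      intro x
      simp only [Finset.mem_singleton]
      constructor
      · intro hx
        rcases hmem x hx with rfl | rfl | rfl
        · exact absurd hx hu
        · rfl
        · exact absurd hx hwS
      · rintro rfl; exact hv
    · exfalso
      have hS : S = ∅ := by
        apply Finset.ext
        intro x
        simp only [Finset.notMem_empty, iff_false]
        intro hx
        rcases hmem x hx with rfl | rfl | rfl
        exacts [hu hx, hv hx, hwS hx]
      subst hS
      have hbd1 : bd k {u,v} ∈ Submodule.span k (sset k (faces Kc 1 \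
          ((∅ : Finset (Finset (Fin 3))) : Set (Finset (Fin 3))))) := by
        rw [Finset.coe_empty, Set.diff_empty, bd_edge' huv]
        have h1 : (Finsupp.single {v} (coeffSign k u {u,v}) : Ch k)
            = coeffSign k u {u,v} • Finsupp.single {v} (1:k) := by
          rw [Finsupp.smul_single', mul_one]
        have h2 : (Finsupp.single {u} (coeffSign k v {u,v}) : Ch k)
            = coeffSign k v {u,v} • Finsupp.single {u} (1:k) := by
          rw [Finsupp.smul_single', mul_one]
        rw [h1, h2]
        apply add_mem
        · exact Submodule.smul_mem _ _ (Submodule.subset_span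
            (Set.mem_image_of_mem _ (by rw [hf1]; simp)))
        · exact Submodule.smul_mem _ _ (Submodule.subset_span
            (Set.mem_image_of_mem _ (by rw [hf1]; simp)))
      have hbd2 : bd k {u,v} ∈ bdries k Kc 1 := hB ▸ Submodule.subset_span rfl
      have : bd k {u,v} ∈ (⊥ : Submodule k (Ch k)) := hinf ▸ Submodule.mem_inf.2 ⟨hbd1, hbd2⟩
      rw [Submodule.mem_bot] at this
      have h0 := congrArg (fun f : Ch k => f {u}) this
      simp only [Finsupp.coe_zero, Pi.zero_apply] at h0
      rw [bd_pair_apply_fst huv] at h0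
      rw [Finset.pair_comm u v] at h0
      exact coeffSign_ne_zero huv.symm h0
  · rintro (rfl | rfl)
    · apply isStakeSet_mid_of huv.symm hvw huw
        (by rw [hf1, Set.insert_comm]) (by rw [hB, Finset.pair_comm u v])
    · exact isStakeSet_mid_of huv huw hvw hf1 hB

end Aux5

section Aux6
variable {k : Type} [Field k] {Kc : Set (Finset (Fin 3))}

lemma hedgeRim_eq {c : ℕ} {τ : Finset (Fin 3)} (hB : bdries k Kc c = ⊥)
    (hτ : τ ∈ faces Kc c) :
    hedgeRim k Kc c ∅ τ = Finsupp.single τ (1:k) := by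
  have hw : (Finsupp.single τ (1:k) : Ch k) ∈ Submodule.span k
        (sset k (faces Kc c \ ((∅ : Finset (Finset (Fin 3))) : Set (Finset (Fin 3))))) ∧
      Finsupp.single τ (1:k) - Finsupp.single τ (1:k) ∈ bdries k Kc c := by
    constructor
    · rw [Finset.coe_empty, Set.diff_empty]
      exact Submodule.subset_span (Set.mem_image_of_mem _ hτ)
    · rw [sub_self]; exact Submodule.zero_mem _
  have hex : ∃! r : Ch k,
      r ∈ Submodule.span k (sset k (faces Kc c \
        ((∅ : Finset (Finset (Fin 3))) : Set (Finset (Fin 3))))) ∧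
      Finsupp.single τ (1:k) - r ∈ bdries k Kc c := by
    refine ⟨Finsupp.single τ (1:k), hw, ?_⟩
    rintro y ⟨-, hy2⟩
    rw [hB, Submodule.mem_bot, sub_eq_zero] at hy2
    exact hy2.symm
  rw [hedgeRim, dif_pos hex]
  exact hex.unique hex.exists.choose_spec hw

lemma circuit_vertices (t0 s0 : Fin 3) :
    circuit k {({t0} : Finset (Fin 3))} {s0}
      = Finsupp.single {s0} (1:k) - Finsupp.single {t0} (1:k) := by
  have hsset : sset k ((({{t0}} : Finset (Finset (Fin 3)))) : Set (Finset (Fin 3)))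
      = {Finsupp.single {t0} (1:k)} := by
    rw [Finset.coe_singleton, sset, Set.image_singleton]
  have hw : bdry k (Finsupp.single {s0} (1:k) - Finsupp.single {t0} (1:k)) = 0 ∧
      Finsupp.single {s0} (1:k) - (Finsupp.single {s0} (1:k) - Finsupp.single {t0} (1:k)) ∈
        Submodule.span k (sset k ((({{t0}} : Finset (Finset (Fin 3)))) : Set (Finset (Fin 3)))) := by
    constructor
    · rw [map_sub, bdry_single, bdry_single, bd_vertex, bd_vertex, sub_self]
    · rw [sub_sub_cancel, hsset]
      exact Submodule.subset_span rfl
  have hex : ∃! z : Ch k, bdry k z = 0 ∧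
      Finsupp.single {s0} (1:k) - z ∈
        Submodule.span k (sset k ((({{t0}} : Finset (Finset (Fin 3)))) : Set (Finset (Fin 3)))) := by
    refine ⟨_, hw, ?_⟩
    rintro y ⟨hy1, hy2⟩
    rw [hsset, Submodule.mem_span_singleton] at hy2
    obtain ⟨c, hc⟩ := hy2
    have hy : y = Finsupp.single {s0} (1:k) - c • Finsupp.single {t0} (1:k) := by
      rw [hc]; abel
    rw [hy, map_sub, map_smul, bdry_single, bdry_single, bd_vertex, bd_vertex] at hy1
    have hc1 := congrArg (fun f : Ch k => f ∅) hy1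
    simp only [Finsupp.sub_apply, Finsupp.smul_apply, Finsupp.single_eq_same, smul_eq_mul,
      mul_one, Finsupp.coe_zero, Pi.zero_apply] at hc1
    have : c = 1 := (sub_eq_zero.1 hc1).symm
    rw [hy, this, one_smul]
  rw [circuit, dif_pos hex]
  exact hex.unique hex.exists.choose_spec hw

lemma shrub_mid {u v : Fin 3} (huv : u ≠ v) :
    shrub k {({v} : Finset (Fin 3))} {({u,v} : Finset (Fin 3))} {v}
      = (coeffSign k u {u,v})⁻¹ • Finsupp.single {u,v} (1:k) := by
  have hsset : sset k ((({{u,v}} : Finset (Finset (Fin 3)))) : Set (Finset (Fin 3)))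
      = {Finsupp.single {u,v} (1:k)} := by
    rw [Finset.coe_singleton, sset, Set.image_singleton]
  have hval : bdry k ((coeffSign k u {u,v})⁻¹ • Finsupp.single {u,v} (1:k)) {v} = 1 := by
    rw [map_smul, bdry_single, Finsupp.smul_apply, bd_pair_apply_snd huv, smul_eq_mul,
      inv_mul_cancel₀ (coeffSign_ne_zero huv)]
  have hw : ((coeffSign k u {u,v})⁻¹ • Finsupp.single {u,v} (1:k) : Ch k) ∈
        Submodule.span k (sset k ((({{u,v}} : Finset (Finset (Fin 3)))) : Set (Finset (Fin 3)))) ∧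
      bdry k ((coeffSign k u {u,v})⁻¹ • Finsupp.single {u,v} (1:k)) {v} = 1 ∧
      ∀ σ' ∈ ({({v} : Finset (Fin 3))} : Finset (Finset (Fin 3))), σ' ≠ {v} →
        bdry k ((coeffSign k u {u,v})⁻¹ • Finsupp.single {u,v} (1:k)) σ' = 0 := by
    refine ⟨?_, hval, ?_⟩
    · rw [hsset]
      exact Submodule.smul_mem _ _ (Submodule.subset_span rfl)
    · intro σ' hσ' hne
      exact absurd (Finset.mem_singleton.1 hσ') hne
  have hex : ∃! s : Ch k, s ∈
        Submodule.span k (sset k ((({{u,v}} : Finset (Finset (Fin 3)))) : Set (Finset (Fin 3)))) ∧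
      bdry k s {v} = 1 ∧
      ∀ σ' ∈ ({({v} : Finset (Fin 3))} : Finset (Finset (Fin 3))), σ' ≠ {v} →
        bdry k s σ' = 0 := by
    refine ⟨_, hw, ?_⟩
    rintro y ⟨hy1, hy2, -⟩
    rw [hsset, Submodule.mem_span_singleton] at hy1
    obtain ⟨c, hc⟩ := hy1
    rw [← hc, map_smul, bdry_single, Finsupp.smul_apply, bd_pair_apply_snd huv,
      smul_eq_mul] at hy2
    rw [← hc, eq_inv_of_mul_eq_one_left hy2]
  rw [shrub, dif_pos hex]
  exact hex.unique hex.exists.choose_spec hw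

end Aux6

section Aux7
variable {k : Type} [Field k]

/-- The hedgerow with given middle stake set `Sv`, middle shrubbery `{TT}`, bottom
shrubbery `Tav`. -/
def mkHR (TT Sv Tav : Finset (Finset (Fin 3))) : HRData 2 :=
  (∅, fun m => if m = 1 then Sv else ∅, fun m => if m = 1 then TT else ∅, Tav)

lemma mkHR_inj {TT Sv Tav Sv' Tav' : Finset (Finset (Fin 3))} :
    mkHR TT Sv Tav = mkHR TT Sv' Tav' ↔ (Sv = Sv' ∧ Tav = Tav') := by
  constructor
  · intro h
    refine ⟨?_, congrArg (fun x : HRData 2 => x.2.2.2) h⟩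
    have := congrArg (fun x : HRData 2 => x.2.1 1) h
    simpa [mkHR] using this
  · rintro ⟨rfl, rfl⟩; rfl

lemma isHedgerow_iff_aux {I : Set V3} {a : V3} {d : Fin 2 → Fin 3}
    {SA SB TT TA TB : Finset (Finset (Fin 3))}
    (hSb : ∀ S, IsStakeSet k (K I (pt a d 2)) 2 S ↔ S = ∅)
    (hSm : ∀ S, IsStakeSet k (K I (pt a d 1)) 1 S ↔ S = SA ∨ S = SB)
    (hTm : ∀ T, IsShrubbery k (K I (pt a d 1)) 2 T ↔ T = TT)
    (hTa : ∀ T, IsShrubbery k (K I a) 1 T ↔ T = TA ∨ T = TB)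
    (h : HRData 2) :
    IsHedgerow k I a d 2 h ↔
      (h.1 = ∅ ∧ (h.2.1 1 = SA ∨ h.2.1 1 = SB) ∧ h.2.2.1 1 = TT ∧
        h.2.1 0 = ∅ ∧ h.2.1 2 = ∅ ∧ h.2.2.1 0 = ∅ ∧ h.2.2.1 2 = ∅ ∧
        (h.2.2.2 = TA ∨ h.2.2.2 = TB)) := by
  constructor
  · rintro ⟨h1, h2, h3, h4⟩
    have hint := h2 1 (by norm_num) (by norm_num)
    have hb0 := h3 0 (Or.inl rfl)
    have hb2 := h3 2 (Or.inr (by norm_num))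
    exact ⟨(hSb _).1 h1, (hSm _).1 hint.1, (hTm _).1 hint.2, hb0.1, hb2.1, hb0.2, hb2.2,
      (hTa _).1 h4⟩
  · rintro ⟨e1, e2, e3, e4, e5, e6, e7, e8⟩
    refine ⟨(hSb _).2 e1, ?_, ?_, (hTa _).2 e8⟩
    · intro m h0 h2'
      have hm : m = 1 := by
        fin_cases m
        · norm_num at h0
        · rfl
        · norm_num at h2'
      subst hm
      exact ⟨(hSm _).2 e2, (hTm _).2 e3⟩
    · intro m hm
      fin_cases m
      · exact ⟨e4, e6⟩
      · norm_num at hm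
      · exact ⟨e5, e7⟩

lemma delta_eq_four {I : Set V3} {a : V3} {d : Fin 2 → Fin 3}
    {SA SB TT TA TB : Finset (Finset (Fin 3))} (hS : SA ≠ SB) (hT : TA ≠ TB)
    (hiff : ∀ h : HRData 2, IsHedgerow k I a d 2 h ↔
      (h.1 = ∅ ∧ (h.2.1 1 = SA ∨ h.2.1 1 = SB) ∧ h.2.2.1 1 = TT ∧
        h.2.1 0 = ∅ ∧ h.2.1 2 = ∅ ∧ h.2.2.1 0 = ∅ ∧ h.2.2.1 2 = ∅ ∧
        (h.2.2.2 = TA ∨ h.2.2.2 = TB))) :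
    Delta k I a d 2 = 4 := by
  have hset : {h : HRData 2 | IsHedgerow k I a d 2 h}
      = {mkHR TT SA TA, mkHR TT SA TB, mkHR TT SB TA, mkHR TT SB TB} := by
    ext h
    rw [Set.mem_setOf_eq, hiff]
    constructor
    · rintro ⟨h1, h2, h3, h4, h5, h6, h7, h8⟩
      obtain ⟨Sb, S, T, Ta⟩ := h
      simp only at h1 h2 h3 h4 h5 h6 h7 h8
      subst h1
      have hSfun : S = fun m => if m = 1 then S 1 else ∅ := by
        funext m
        fin_cases m
        · show S 0 = if (0 : Fin 3) = 1 then S 1 else ∅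
          rw [if_neg (by decide)]; exact h4
        · show S 1 = if (1 : Fin 3) = 1 then S 1 else ∅
          rw [if_pos rfl]
        · show S 2 = if (2 : Fin 3) = 1 then S 1 else ∅
          rw [if_neg (by decide)]; exact h5
      have hTfun : T = fun m => if m = 1 then T 1 else ∅ := by
        funext m
        fin_cases m
        · show T 0 = if (0 : Fin 3) = 1 then T 1 else ∅
          rw [if_neg (by decide)]; exact h6
        · show T 1 = if (1 : Fin 3) = 1 then T 1 else ∅
          rw [if_pos rfl]
        · show T 2 = if (2 : Fin 3) = 1 then T 1 else ∅
          rw [if_neg (by decide)]; exact h7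
      simp only [Set.mem_insert_iff, Set.mem_singleton_iff]
      rcases h2 with h2 | h2 <;> rcases h8 with h8 | h8
      · left; rw [hSfun, hTfun, h2, h3, h8]; rfl
      · right; left; rw [hSfun, hTfun, h2, h3, h8]; rfl
      · right; right; left; rw [hSfun, hTfun, h2, h3, h8]; rfl
      · right; right; right; rw [hSfun, hTfun, h2, h3, h8]; rfl
    · rintro (rfl | rfl | rfl | rfl) <;> simp [mkHR]
  have hcard : Nat.card {h : HRData 2 // IsHedgerow k I a d 2 h}
      = ({h : HRData 2 | IsHedgerow k I a d 2 h} : Set (HRData 2)).ncard :=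
    Nat.card_coe_set_eq _
  rw [Delta, hcard, hset]
  rw [Set.ncard_insert_of_notMem (by
      simp only [Set.mem_insert_iff, Set.mem_singleton_iff, mkHR_inj]
      push_neg
      exact ⟨fun _ => hT, fun h => absurd h hS, fun h => absurd h hS⟩),
    Set.ncard_insert_of_notMem (by
      simp only [Set.mem_insert_iff, Set.mem_singleton_iff, mkHR_inj]
      push_neg
      exact ⟨fun h => absurd h hS, fun h => absurd h hS⟩),
    Set.ncard_insert_of_notMem (by
      simp only [Set.mem_singleton_iff, mkHR_inj]
      push_neg
      intro _
      exact hT),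
    Set.ncard_singleton]

end Aux7

section Aux8
variable {k : Type} [Field k]

/-- The canonical chain-link fence data. -/
def mkF (TT Sv Tav : Finset (Finset (Fin 3))) (ij s0 s1 : Finset (Fin 3)) : FData 2 :=
  (mkHR TT Sv Tav, fun m => if m = 0 then ∅ else ij,
    fun m => if m = 0 then s0 else if m = 1 then s1 else ∅)

end Aux8

/-- Along a length-2 lattice path `λ = (a, b₁, b)` with
`K^b I = ⟨ij,ik,jk⟩`, `K^(b₁) I = ⟨ij,k⟩` and `K^a I = ⟨i,j⟩`, the contribution
of `λ` to the degree-1 sylvan matrix is as displayed. -/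
theorem statement10 (k : Type) [Field k] (h2 : (2:k) ≠ 0) (h3 : (3:k) ≠ 0)
    (I : Set V3) (hI : IsMonomialIdeal I) (a : V3)
    (i j l : Fin 3) (hij : i ≠ j) (hil : i ≠ l) (hjl : j ≠ l)
    (d : Fin 2 → Fin 3) (hd1 : d 1 = i) (hd0 : d 0 = i ∨ d 0 = j)
    (hKb : hasFacets (K I (pt a d 2)) {{i, j}, {i, l}, {j, l}})
    (hKc : hasFacets (K I (pt a d 1)) {{i, j}, {l}})
    (hKa : hasFacets (K I a) {{i}, {j}}) :
    Dpath k I a d 2 {i} {i, j} = coeffSign k j {i, j} / 4 ∧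
    Dpath k I a d 2 {j} {i, j} = coeffSign k i {i, j} / 4 ∧
    (∀ v : Fin 3, v = i ∨ v = j →
      Dpath k I a d 2 {v} {i, l} = 0 ∧ Dpath k I a d 2 {v} {j, l} = 0) := by
  -- erase facts
  have heri : ({i,j} : Finset (Fin 3)).erase i = {j} := Finset.erase_insert (by simp [hij])
  have herj : ({i,j} : Finset (Fin 3)).erase j = {i} := by
    rw [Finset.erase_insert_of_ne hij]; simp
  have herl : ({i,l} : Finset (Fin 3)).erase i = {l} := Finset.erase_insert (by simp [hil])
  have herjl : ({j,l} : Finset (Fin 3)).erase i = {j,l} :=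
    Finset.erase_eq_of_notMem (by simp only [Finset.mem_insert, Finset.mem_singleton]; push_neg; exact ⟨hij, hil⟩)
  have hptz : pt a d 0 = a := by funext x; simp [pt]
  -- structural facts
  have hfKB2 : faces (K I (pt a d 2)) 2 = {{i,j},{i,l},{j,l}} :=
    facets_triangle_faces2 hij hil hjl hKb
  have hBB : bdries k (K I (pt a d 2)) 2 = ⊥ :=
    bdries_eq_bot (facets_triangle_faces3 hij hil hjl hKb)
  have hfKM2 : faces (K I (pt a d 1)) 2 = {({i,j} : Finset (Fin 3))} :=
    facets_edgevertex_faces2 hij hKc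
  have hfKM1 : faces (K I (pt a d 1)) 1 = {{i},{j},{l}} := facets_edgevertex_faces1 hij hKc
  have hBM : bdries k (K I (pt a d 1)) 1 = Submodule.span k {bd k {i,j}} :=
    bdries_of_faces_singleton hfKM2
  have hfKA1 : faces (K I a) 1 = {{i},{j}} := facets_twopoints_faces1 hKa
  have hbdne : bd k ({i,j} : Finset (Fin 3)) ≠ 0 := fun h =>
    coeffSign_ne_zero (k := k) hij (by rw [← bd_pair_apply_snd hij, h]; simp)
  -- characterizations
  have hSb : ∀ S, IsStakeSet k (K I (pt a d 2)) 2 S ↔ S = ∅ := fun S =>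
    isStakeSet_iff_of_bdries_bot hBB S
  have hSm : ∀ S, IsStakeSet k (K I (pt a d 1)) 1 S ↔ S = {{i}} ∨ S = {{j}} := fun S =>
    isStakeSet_mid_iff hij hil hjl hfKM1 hBM S
  have hTm : ∀ T, IsShrubbery k (K I (pt a d 1)) 2 T ↔ T = {({i,j} : Finset (Fin 3))} :=
    fun T => isShrubbery_iff_of_faces_singleton hfKM2 hbdne T
  have hTa : ∀ T, IsShrubbery k (K I a) 1 T ↔ T = {{i}} ∨ T = {{j}} := fun T =>
    isShrubbery_twopoints_iff hij hfKA1 T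
  have hHR := isHedgerow_iff_aux hSb hSm hTm hTa
  have hsne : ({({i} : Finset (Fin 3))} : Finset (Finset (Fin 3))) ≠ {{j}} := by
    simp only [ne_eq, Finset.singleton_inj]
    exact hij
  have hDelta : Delta k I a d 2 = 4 := delta_eq_four hsne hsne hHR
  -- hedge rims at the top
  have hrimIJ : hedgeRim k (K I (pt a d 2)) 2 ∅ {i,j} = Finsupp.single {i,j} (1:k) :=
    hedgeRim_eq hBB (by rw [hfKB2]; exact Set.mem_insert _ _)
  have hrimIL : hedgeRim k (K I (pt a d 2)) 2 ∅ {i,l} = Finsupp.single {i,l} (1:k) :=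
    hedgeRim_eq hBB (by rw [hfKB2]; exact Set.mem_insert_of_mem _ (Set.mem_insert _ _))
  have hrimJL : hedgeRim k (K I (pt a d 2)) 2 ∅ {j,l} = Finsupp.single {j,l} (1:k) :=
    hedgeRim_eq hBB (by rw [hfKB2]; exact Set.mem_insert_of_mem _ (Set.mem_insert_of_mem _ rfl))
  -- the unique fence for τtop = {i,j}
  set f0 : FData 2 := mkF {({i,j} : Finset (Fin 3))} {{j}} {{d 0}} {i,j}
    (({i,j} : Finset (Fin 3)).erase (d 0)) {j} with hf0
  have hFset : ∀ v : Fin 3, v = i ∨ v = j →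
      {f : FData 2 | IsFence k I a d 2 {v} {i,j} f} = {f0} := by
    intro v hv
    ext f
    simp only [Set.mem_setOf_eq, Set.mem_singleton_iff]
    constructor
    · intro hf
      obtain ⟨⟨Sb, S, T, Ta⟩, tau, sig⟩ := f
      obtain ⟨hHRf, htau, hsig, htau0, hsiglast, hrimne, herase, hint, hcirc⟩ := hf
      obtain ⟨e1, e2, e3, e4, e5, e6, e7, e8⟩ := (hHR _).1 hHRf
      have e1' : Sb = ∅ := e1
      subst e1'
      have e2' : S 1 = ({({i}:Finset (Fin 3))} : Finset (Finset (Fin 3))) ∨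
          S 1 = ({({j}:Finset (Fin 3))} : Finset (Finset (Fin 3))) := e2
      have e3' : T 1 = ({({i,j}:Finset (Fin 3))} : Finset (Finset (Fin 3))) := e3
      have e4' : S 0 = ∅ := e4
      have e5' : S 2 = ∅ := e5
      have e6' : T 0 = ∅ := e6
      have e7' : T 2 = ∅ := e7
      have e8' : Ta = ({({i}:Finset (Fin 3))} : Finset (Finset (Fin 3))) ∨
          Ta = ({({j}:Finset (Fin 3))} : Finset (Finset (Fin 3))) := e8
      have htau0' : tau 0 = ∅ := htau0
      have hsiglast' : sig 2 = ∅ := hsiglast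
      have hrimne' : (Finsupp.single ({i,j} : Finset (Fin 3)) (1:k))
          (tau (Fin.last 2)) ≠ 0 := by
        have h' : (hedgeRim k (K I (pt a d 2)) 2 ∅ {i,j}) (tau (Fin.last 2)) ≠ 0 := hrimne
        rwa [hrimIJ] at h'
      have htau2 : tau (Fin.last 2) = {i,j} := by
        by_contra hne
        exact hrimne' (Finsupp.single_eq_of_ne' (fun hh => hne hh.symm))
      have htau2' : tau 2 = {i,j} := htau2
      have htau1 : tau 1 = {i,j} := by
        have h1 : tau 1 ∈ faces (K I (pt a d 1)) 2 := htau 1 (by norm_num)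
        rw [hfKM2] at h1
        simpa using h1
      have hsig0 : sig 0 = (tau 1).erase (d 0) := herase 0
      rw [htau1] at hsig0
      have hsig1 : sig 1 = (tau 2).erase (d 1) := herase 1
      rw [htau2', hd1, heri] at hsig1
      have hcirc' : (circuit k Ta (sig 0)) {v} ≠ 0 := hcirc
      have hS1 : S 1 = {{j}} := by
        have hmem : sig 1 ∈ S 1 := (hint 1 (by norm_num) (by norm_num)).1
        rcases e2' with e2' | e2'
        · exfalso
          rw [hsig1, e2'] at hmem
          exact singleton_ne_singleton hij.symm (by simpa using hmem)
        · exact e2'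
      have hTad : Ta = {{d 0}} := by
        rcases hd0 with hdd | hdd
        · rw [hdd, heri] at hsig0
          rcases e8' with e8' | e8'
          · rw [hdd]; exact e8'
          · exfalso
            rw [e8', hsig0, circuit_vertices j j, sub_self] at hcirc'
            simp at hcirc'
        · rw [hdd, herj] at hsig0
          rcases e8' with e8' | e8'
          · exfalso
            rw [e8', hsig0, circuit_vertices i i, sub_self] at hcirc'
            simp at hcirc'
          · rw [hdd]; exact e8'
      have hSfun : S = fun m => if m = 1 then ({({j}:Finset (Fin 3))} : Finset (Finset (Fin 3))) else ∅ := by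
        funext m
        fin_cases m
        · show S 0 = if (0 : Fin 3) = 1 then ({({j}:Finset (Fin 3))} : Finset (Finset (Fin 3))) else ∅
          rw [if_neg (by decide)]; exact e4'
        · show S 1 = if (1 : Fin 3) = 1 then ({({j}:Finset (Fin 3))} : Finset (Finset (Fin 3))) else ∅
          rw [if_pos rfl]; exact hS1
        · show S 2 = if (2 : Fin 3) = 1 then ({({j}:Finset (Fin 3))} : Finset (Finset (Fin 3))) else ∅
          rw [if_neg (by decide)]; exact e5'
      have hTfun : T = fun m => if m = 1 then ({({i,j}:Finset (Fin 3))} : Finset (Finset (Fin 3))) else ∅ := by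
        funext m
        fin_cases m
        · show T 0 = if (0 : Fin 3) = 1 then ({({i,j}:Finset (Fin 3))} : Finset (Finset (Fin 3))) else ∅
          rw [if_neg (by decide)]; exact e6'
        · show T 1 = if (1 : Fin 3) = 1 then ({({i,j}:Finset (Fin 3))} : Finset (Finset (Fin 3))) else ∅
          rw [if_pos rfl]; exact e3'
        · show T 2 = if (2 : Fin 3) = 1 then ({({i,j}:Finset (Fin 3))} : Finset (Finset (Fin 3))) else ∅
          rw [if_neg (by decide)]; exact e7'
      have htaufun : tau = fun m => if m = 0 then ∅ else ({i,j} : Finset (Fin 3)) := by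
        funext m
        fin_cases m
        · show tau 0 = if (0 : Fin 3) = 0 then ∅ else ({i,j} : Finset (Fin 3))
          rw [if_pos rfl]; exact htau0'
        · show tau 1 = if (1 : Fin 3) = 0 then ∅ else ({i,j} : Finset (Fin 3))
          rw [if_neg (by decide)]; exact htau1
        · show tau 2 = if (2 : Fin 3) = 0 then ∅ else ({i,j} : Finset (Fin 3))
          rw [if_neg (by decide)]; exact htau2'
      have hsigfun : sig = fun m => if m = 0 then ({i,j} : Finset (Fin 3)).erase (d 0)
          else if m = 1 then {j} else ∅ := by
        funext m
        fin_cases m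
        · show sig 0 = if (0 : Fin 3) = 0 then ({i,j} : Finset (Fin 3)).erase (d 0)
              else if (0 : Fin 3) = 1 then {j} else ∅
          rw [if_pos rfl]; exact hsig0
        · show sig 1 = if (1 : Fin 3) = 0 then ({i,j} : Finset (Fin 3)).erase (d 0)
              else if (1 : Fin 3) = 1 then {j} else ∅
          rw [if_neg (by decide), if_pos rfl]; exact hsig1
        · show sig 2 = if (2 : Fin 3) = 0 then ({i,j} : Finset (Fin 3)).erase (d 0)
              else if (2 : Fin 3) = 1 then {j} else ∅
          rw [if_neg (by decide), if_neg (by decide)]; exact hsiglast'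
      rw [hf0, hSfun, hTfun, htaufun, hsigfun, hTad]
      rfl
    · rintro rfl
      refine ⟨?_, ?_, ?_, rfl, rfl, ?_, ?_, ?_, ?_⟩
      · refine (hHR _).2 ⟨rfl, Or.inr rfl, rfl, rfl, rfl, rfl, rfl, ?_⟩
        rcases hd0 with hdd | hdd
        · left
          show ({({d 0}:Finset (Fin 3))} : Finset (Finset (Fin 3))) = {{i}}
          rw [hdd]
        · right
          show ({({d 0}:Finset (Fin 3))} : Finset (Finset (Fin 3))) = {{j}}
          rw [hdd]
      · intro m hm
        fin_cases m
        · exact absurd hm (by decide)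
        · show ({i,j} : Finset (Fin 3)) ∈ faces (K I (pt a d 1)) 2
          rw [hfKM2]; rfl
        · show ({i,j} : Finset (Fin 3)) ∈ faces (K I (pt a d 2)) 2
          rw [hfKB2]; exact Set.mem_insert _ _
      · intro m hm
        fin_cases m
        · show ({i,j} : Finset (Fin 3)).erase (d 0) ∈ faces (K I (pt a d 0)) 1
          rw [hptz, hfKA1]
          rcases hd0 with hdd | hdd
          · rw [hdd, heri]; exact Set.mem_insert_of_mem _ rfl
          · rw [hdd, herj]; exact Set.mem_insert _ _
        · show ({j} : Finset (Fin 3)) ∈ faces (K I (pt a d 1)) 1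
          rw [hfKM1]; exact Set.mem_insert_of_mem _ (Set.mem_insert _ _)
        · exact absurd hm (by decide)
      · show (hedgeRim k (K I (pt a d 2)) 2 ∅ {i,j}) ({i,j} : Finset (Fin 3)) ≠ 0
        rw [hrimIJ, Finsupp.single_eq_same]
        exact one_ne_zero
      · intro m
        fin_cases m
        · rfl
        · show ({j} : Finset (Fin 3)) = ({i,j} : Finset (Fin 3)).erase (d 1)
          rw [hd1, heri]
      · intro m h0 h2'
        fin_cases m
        · exact absurd h0 (by decide)
        · refine ⟨Finset.mem_singleton_self _, ?_⟩
          show (shrub k {({j}:Finset (Fin 3))} {({i,j}:Finset (Fin 3))} {j})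
            ({i,j} : Finset (Fin 3)) ≠ 0
          rw [shrub_mid hij, Finsupp.smul_apply, Finsupp.single_eq_same]
          simp [coeffSign_ne_zero hij]
        · exact absurd h2' (by decide)
      · show (circuit k {{d 0}} (({i,j} : Finset (Fin 3)).erase (d 0))) {v} ≠ 0
        rcases hd0 with hdd | hdd <;> rcases hv with rfl | rfl
        · rw [hdd, heri, circuit_vertices, Finsupp.sub_apply,
            Finsupp.single_eq_of_ne' (singleton_ne_singleton hij.symm),
            Finsupp.single_eq_same]
          simp
        · rw [hdd, heri, circuit_vertices, Finsupp.sub_apply, Finsupp.single_eq_same,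
            Finsupp.single_eq_of_ne' (singleton_ne_singleton hij)]
          simp
        · rw [hdd, herj, circuit_vertices, Finsupp.sub_apply, Finsupp.single_eq_same,
            Finsupp.single_eq_of_ne' (singleton_ne_singleton hij.symm)]
          simp
        · rw [hdd, herj, circuit_vertices, Finsupp.sub_apply,
            Finsupp.single_eq_of_ne' (singleton_ne_singleton hij),
            Finsupp.single_eq_same]
          simp
  -- weight of the unique fence
  have hweight : ∀ v : Fin 3, weight k I a d 2 {v} {i,j} f0 =
      bd k {i,j} (({i,j} : Finset (Fin 3)).erase (d 0)) *
        (((Finsupp.single (({i,j} : Finset (Fin 3)).erase (d 0)) (1:k)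
          - Finsupp.single {(d 0)} (1:k)) : Ch k) {v}) := by
    intro v
    rw [weight]
    have f1 : (hedgeRim k (K I (pt a d 2)) 2 f0.1.1 {i,j}) (f0.2.1 (Fin.last 2)) = 1 := by
      show (hedgeRim k (K I (pt a d 2)) 2 ∅ {i,j}) ({i,j} : Finset (Fin 3)) = 1
      rw [hrimIJ, Finsupp.single_eq_same]
    have f2 : (∏ m : Fin 3, if 0 < (m:ℕ) ∧ (m:ℕ) < 2
        then (shrub k (f0.1.2.1 m) (f0.1.2.2.1 m) (f0.2.2 m)) (f0.2.1 m) else 1)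
        = (coeffSign k i {i,j})⁻¹ := by
      rw [Fin.prod_univ_three]
      rw [if_neg (by decide), if_pos (by decide), if_neg (by decide)]
      have : (shrub k (f0.1.2.1 1) (f0.1.2.2.1 1) (f0.2.2 1)) (f0.2.1 1)
          = (coeffSign k i {i,j})⁻¹ := by
        show (shrub k {({j}:Finset (Fin 3))} {({i,j}:Finset (Fin 3))} {j}) ({i,j} : Finset (Fin 3))
          = (coeffSign k i {i,j})⁻¹
        rw [shrub_mid hij, Finsupp.smul_apply, Finsupp.single_eq_same, smul_eq_mul, mul_one]
      rw [this, one_mul, mul_one]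
    have f3 : (∏ m : Fin 2, (bdry k (Finsupp.single (f0.2.1 m.succ) (1:k))) (f0.2.2 m.castSucc))
        = bd k {i,j} (({i,j} : Finset (Fin 3)).erase (d 0)) * coeffSign k i {i,j} := by
      rw [Fin.prod_univ_two]
      have t0 : (bdry k (Finsupp.single (f0.2.1 (0:Fin 2).succ) (1:k))) (f0.2.2 (0:Fin 2).castSucc)
          = bd k {i,j} (({i,j} : Finset (Fin 3)).erase (d 0)) := by
        show (bdry k (Finsupp.single ({i,j}:Finset (Fin 3)) (1:k))) (({i,j} : Finset (Fin 3)).erase (d 0)) = _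
        rw [bdry_single]
      have t1 : (bdry k (Finsupp.single (f0.2.1 (1:Fin 2).succ) (1:k))) (f0.2.2 (1:Fin 2).castSucc)
          = coeffSign k i {i,j} := by
        show (bdry k (Finsupp.single ({i,j}:Finset (Fin 3)) (1:k))) ({j} : Finset (Fin 3)) = _
        rw [bdry_single, bd_pair_apply_snd hij]
      rw [t0, t1]
    have f4 : (circuit k f0.1.2.2.2 (f0.2.2 0)) {v}
        = ((Finsupp.single (({i,j} : Finset (Fin 3)).erase (d 0)) (1:k)
          - Finsupp.single {(d 0)} (1:k)) : Ch k) {v} := by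
      show (circuit k {{d 0}} (({i,j} : Finset (Fin 3)).erase (d 0))) {v} = _
      rcases hd0 with hdd | hdd
      · rw [hdd, heri, circuit_vertices]
      · rw [hdd, herj, circuit_vertices]
    rw [f1, f2, f3, f4, one_mul]
    have hinv : (coeffSign k i {i,j})⁻¹ = coeffSign k i {i,j} :=
      (eq_inv_of_mul_eq_one_left (coeffSign_sq hij)).symm
    rw [hinv]
    linear_combination ((bd k {i,j}) (({i,j} : Finset (Fin 3)).erase (d 0)) *
      (((Finsupp.single (({i,j} : Finset (Fin 3)).erase (d 0)) (1:k)
        - Finsupp.single {(d 0)} (1:k)) : Ch k) {v})) * coeffSign_sq (k := k) hij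
  have hne4 : ((4:ℕ) : k) ≠ 0 := by
    have : ((4:ℕ) : k) = 2 * 2 := by norm_num
    rw [this]
    exact mul_ne_zero h2 h2
  refine ⟨?_, ?_, ?_⟩
  · rw [Dpath, hDelta, hFset i (Or.inl rfl), finsum_mem_singleton, hweight]
    rcases hd0 with hdd | hdd
    · rw [hdd, heri, bd_pair_apply_snd hij, Finsupp.sub_apply,
        Finsupp.single_eq_of_ne' (singleton_ne_singleton hij.symm), Finsupp.single_eq_same,
        coeffSign_neg hij]
      push_cast
      ring
    · rw [hdd, herj, bd_pair_apply_fst hij, Finsupp.sub_apply, Finsupp.single_eq_same,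
        Finsupp.single_eq_of_ne' (singleton_ne_singleton hij.symm)]
      push_cast
      ring
  · rw [Dpath, hDelta, hFset j (Or.inr rfl), finsum_mem_singleton, hweight]
    rcases hd0 with hdd | hdd
    · rw [hdd, heri, bd_pair_apply_snd hij, Finsupp.sub_apply, Finsupp.single_eq_same,
        Finsupp.single_eq_of_ne' (singleton_ne_singleton hij)]
      push_cast
      ring
    · rw [hdd, herj, bd_pair_apply_fst hij, Finsupp.sub_apply,
        Finsupp.single_eq_of_ne' (singleton_ne_singleton hij), Finsupp.single_eq_same,
        coeffSign_neg hij]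
      push_cast
      ring
  · intro v hv
    constructor
    · have hempty : {f : FData 2 | IsFence k I a d 2 {v} {i,l} f} = ∅ := by
        ext f
        simp only [Set.mem_setOf_eq, Set.mem_empty_iff_false, iff_false]
        intro hf
        obtain ⟨⟨Sb, S, T, Ta⟩, tau, sig⟩ := f
        obtain ⟨hHRf, htau, hsig, htau0, hsiglast, hrimne, herase, hint, hcirc⟩ := hf
        obtain ⟨e1, e2, e3, e4, e5, e6, e7, e8⟩ := (hHR _).1 hHRf
        have e1' : Sb = ∅ := e1
        subst e1'
        have e2' : S 1 = ({({i}:Finset (Fin 3))} : Finset (Finset (Fin 3))) ∨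
            S 1 = ({({j}:Finset (Fin 3))} : Finset (Finset (Fin 3))) := e2
        have hrimne' : (Finsupp.single ({i,l} : Finset (Fin 3)) (1:k))
            (tau (Fin.last 2)) ≠ 0 := by
          have h' : (hedgeRim k (K I (pt a d 2)) 2 ∅ {i,l}) (tau (Fin.last 2)) ≠ 0 := hrimne
          rwa [hrimIL] at h'
        have htau2 : tau 2 = ({i,l} : Finset (Fin 3)) := by
          by_contra hne
          exact hrimne' (Finsupp.single_eq_of_ne' (fun hh => hne hh.symm))
        have hsig1 : sig 1 = (tau 2).erase (d 1) := herase 1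
        rw [htau2, hd1, herl] at hsig1
        have hmem : sig 1 ∈ S 1 := (hint 1 (by norm_num) (by norm_num)).1
        rw [hsig1] at hmem
        rcases e2' with e2' | e2' <;> rw [e2'] at hmem
        · exact hil (Finset.singleton_inj.1 (Finset.mem_singleton.1 hmem)).symm
        · exact hjl (Finset.singleton_inj.1 (Finset.mem_singleton.1 hmem)).symm
      rw [Dpath, hempty, finsum_mem_empty, mul_zero]
    · have hempty : {f : FData 2 | IsFence k I a d 2 {v} {j,l} f} = ∅ := by
        ext f
        simp only [Set.mem_setOf_eq, Set.mem_empty_iff_false, iff_false]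
        intro hf
        obtain ⟨⟨Sb, S, T, Ta⟩, tau, sig⟩ := f
        obtain ⟨hHRf, htau, hsig, htau0, hsiglast, hrimne, herase, hint, hcirc⟩ := hf
        obtain ⟨e1, e2, e3, e4, e5, e6, e7, e8⟩ := (hHR _).1 hHRf
        have e1' : Sb = ∅ := e1
        subst e1'
        have hrimne' : (Finsupp.single ({j,l} : Finset (Fin 3)) (1:k))
            (tau (Fin.last 2)) ≠ 0 := by
          have h' : (hedgeRim k (K I (pt a d 2)) 2 ∅ {j,l}) (tau (Fin.last 2)) ≠ 0 := hrimne
          rwa [hrimJL] at h'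
        have htau2 : tau 2 = ({j,l} : Finset (Fin 3)) := by
          by_contra hne
          exact hrimne' (Finsupp.single_eq_of_ne' (fun hh => hne hh.symm))
        have hsig1 : sig 1 = (tau 2).erase (d 1) := herase 1
        rw [htau2, hd1, herjl] at hsig1
        have hmemf : sig 1 ∈ faces (K I (pt a d 1)) 1 := hsig 1 (by norm_num)
        rw [hsig1, hfKM1] at hmemf
        simp only [Set.mem_insert_iff, Set.mem_singleton_iff] at hmemf
        rcases hmemf with h | h | h <;>
          (have hc := congrArg Finset.card h
           rw [Finset.card_pair hjl, Finset.card_singleton] at hc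
           norm_num at hc)
      rw [Dpath, hempty, finsum_mem_empty, mul_zero]


end Sylvan

end
end

section
/- Let a ≼ b in ℕⁿ (componentwise) and suppose F = supp(b−a) is a facet of K^b I, i.e. F ∈ K^b I and F is not properly contained in any face of K^b I. Then every face of K^a I is a subset of F. -/
noncomputable section

namespace SylvanN

variable {n : ℕ}

/-- A monomial ideal in `k[x₁,…,x_n]`, identified with its (upward closed) set of
exponent vectors. -/
def IsMonomialIdeal (I : Set (Fin n → ℕ)) : Prop :=
  ∀ ⦃c d : Fin n → ℕ⦄, c ∈ I → (∀ i, c i ≤ d i) → d ∈ I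

/-- The 0-1 indicator vector of a squarefree face. -/
def ind (τ : Finset (Fin n)) : Fin n → ℕ := fun i => if i ∈ τ then 1 else 0

/-- The Koszul simplicial complex of `I` in degree `b`:
faces `τ` with `b ≥ τ` and `x^(b-τ) ∈ I`. -/
def K (I : Set (Fin n → ℕ)) (b : Fin n → ℕ) : Set (Finset (Fin n)) :=
  {τ | (∀ i, ind τ i ≤ b i) ∧ (fun i => b i - ind τ i) ∈ I}

/-- `supp(b - a)` for `a ≼ b`: the set of coordinates where `a` and `b` differ. -/
def suppDiff (a b : Fin n → ℕ) : Finset (Fin n) :=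
  Finset.univ.filter fun i => a i < b i

/-- If `a ≼ b` and `F = supp(b-a)` is a facet of `K^b I`, then
every face of `K^a I` is contained in `F`. -/
theorem statement19 (I : Set (Fin n → ℕ)) (hI : IsMonomialIdeal I)
    (a b : Fin n → ℕ) (hab : ∀ i, a i ≤ b i)
    (hF : suppDiff a b ∈ K I b)
    (hfacet : ∀ σ ∈ K I b, suppDiff a b ⊆ σ → σ = suppDiff a b)
    (G : Finset (Fin n)) (hG : G ∈ K I a) :
    G ⊆ suppDiff a b := by
  obtain ⟨hG1, hG2⟩ := hG
  have key : suppDiff a b ∪ G ∈ K I b := by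
    constructor
    · intro i
      unfold ind
      split
      · rename_i h
        rcases Finset.mem_union.mp h with h | h
        · have := (Finset.mem_filter.mp h).2
          omega
        · have := hG1 i
          have hab' := hab i
          unfold ind at this
          simp only [h, if_pos] at this
          omega
      · omega
    · apply hI hG2
      intro i
      unfold ind
      by_cases hF' : i ∈ suppDiff a b
      · have hlt := (Finset.mem_filter.mp hF').2
        simp only [Finset.mem_union, hF', true_or, if_pos]
        split <;> omega
      · have heq : a i = b i := by
          have := hab i
          simp [suppDiff] at hF'
          omega
        simp only [Finset.mem_union, hF', false_or]
        rw [heq]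
  have := hfacet _ key Finset.subset_union_left
  intro x hx
  rw [← this]
  exact Finset.mem_union_right _ hx

end SylvanN

end
end
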